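/- arXiv:1102.2471 — 2 statements merged into one kernel-verified Lean document; each statement's English description precedes it below -/
import Mathlib

section
/- For d ≥ 3, let Ξ_d ⊂ F^d be the four-point set {(0,0,0,0,...,0), (0,1,0,0,...,0), (0,0,1,0,...,0), (1,0,1,0,...,0)} (the last d−3 coordinates of each point being zero). Then the set G = {x_1(x_1−1), x_2(x_2−1), x_3(x_3−1), x_1x_2, x_2x_3, (x_3−1)x_1, x_4, ..., x_d} is, for every monomial order ≺, the reduced Gröbner basis of the vanishing ideal I(Ξ_d) with respect to ≺ (i.e., G is a universal Gröbner basis for I(Ξ_d)). -/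
open MvPolynomial

/-- A monomial order on exponent vectors `Fin d →₀ ℕ`: a linear order in which `0` (i.e. the
monomial `1`) is least and which is compatible with addition of exponents (multiplication of
monomials). -/
structure MonOrder (d : ℕ) where
  toLinearOrder : LinearOrder (Fin d →₀ ℕ)
  zero_le : ∀ a, toLinearOrder.le 0 a
  add_le_add : ∀ a b c, toLinearOrder.le a b → toLinearOrder.le (a + c) (b + c)

/-- `α` is the exponent of the leading monomial of `f` w.r.t. the monomial order `o`. -/
def MonOrder.IsLM {d : ℕ} {F : Type*} [CommSemiring F] (o : MonOrder d)
    (f : MvPolynomial (Fin d) F) (α : Fin d →₀ ℕ) : Prop :=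
  α ∈ f.support ∧ ∀ β ∈ f.support, o.toLinearOrder.le β α
/-- The set of leading monomials (exponents) of (nonzero) elements of `G`. -/
def LMset {d : ℕ} {F : Type*} [CommSemiring F] (o : MonOrder d)
    (G : Set (MvPolynomial (Fin d) F)) : Set (Fin d →₀ ℕ) :=
  {α | ∃ g ∈ G, o.IsLM g α}

/-- `G` is the reduced Gröbner basis of `I` w.r.t. the monomial order `o`: `G` is a finite set
of monic nonzero elements of `I` whose leading monomials minimally generate the monomial ideal
generated by the leading monomials of nonzero elements of `I`, and no monomial appearing in some
`g ∈ G` other than its leading monomial is divisible by the leading monomial of an element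
of `G`. -/
def IsReducedGB {d : ℕ} {F : Type*} [Field F] (o : MonOrder d)
    (I : Ideal (MvPolynomial (Fin d) F)) (G : Set (MvPolynomial (Fin d) F)) : Prop :=
  G.Finite ∧ G ⊆ (I : Set (MvPolynomial (Fin d) F)) ∧ (0 : MvPolynomial (Fin d) F) ∉ G ∧
  (∀ g ∈ G, ∀ α, o.IsLM g α → MvPolynomial.coeff α g = 1) ∧
  (∀ f ∈ I, f ≠ 0 → ∀ α, o.IsLM f α → ∃ g ∈ G, ∃ β, o.IsLM g β ∧ β ≤ α) ∧
  (∀ g ∈ G, ∀ g' ∈ G, g ≠ g' → ∀ β β', o.IsLM g β → o.IsLM g' β' → ¬ β ≤ β') ∧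
  (∀ g ∈ G, ∀ α ∈ g.support, ¬ o.IsLM g α → ∀ g' ∈ G, ∀ β, o.IsLM g' β → ¬ β ≤ α)
/-- The vanishing ideal of a point set `Ξ ⊆ F^d`. -/
noncomputable def vanishIdeal {d : ℕ} {F : Type*} [Field F] (Ξ : Set (Fin d → F)) :
    Ideal (MvPolynomial (Fin d) F) :=
  ⨅ ξ ∈ Ξ, RingHom.ker (MvPolynomial.eval ξ)

lemma MonOrder.div_le {d : ℕ} (o : MonOrder d) {u v : Fin d →₀ ℕ} (h : u ≤ v) :
    o.toLinearOrder.le u v := by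
  have h2 := o.add_le_add 0 (v - u) u (o.zero_le _)
  rwa [zero_add, tsub_add_cancel_of_le h] at h2

lemma MonOrder.eq_of_div_le {d : ℕ} (o : MonOrder d) {u v : Fin d →₀ ℕ} (h : u ≤ v)
    (h2 : o.toLinearOrder.le v u) : v = u :=
  o.toLinearOrder.le_antisymm _ _ h2 (o.div_le h)

lemma not_le_of_coord {d : ℕ} {u v : Fin d →₀ ℕ} (i : Fin d) (h : v i < u i) : ¬ u ≤ v :=
  fun hle => absurd (Finsupp.le_def.mp hle i) h.not_ge

lemma fs_ne {d : ℕ} {u v : Fin d →₀ ℕ} (i : Fin d) (h : u i ≠ v i) : u ≠ v :=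
  fun e => h (by rw [e])

lemma pair_le {d : ℕ} {α : Fin d →₀ ℕ} {i j : Fin d} (hij : i ≠ j) (h1 : 1 ≤ α i)
    (h2 : 1 ≤ α j) : Finsupp.single i 1 + Finsupp.single j 1 ≤ α := by
  rw [Finsupp.le_def]
  intro k
  rw [Finsupp.add_apply, Finsupp.single_apply, Finsupp.single_apply]
  by_cases hik : i = k
  · subst hik
    rw [if_pos rfl, if_neg (fun h => hij h.symm)]
    omega
  · rw [if_neg hik]
    by_cases hjk : j = k
    · subst hjk; rw [if_pos rfl]; omega
    · rw [if_neg hjk]; omega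

section F
variable {F : Type*} [Field F] {d : ℕ}

lemma binom_support {u v : Fin d →₀ ℕ} (huv : u ≠ v) :
    (monomial u 1 - monomial v (1:F)).support = {u, v} := by
  ext β
  simp only [mem_support_iff, coeff_sub, coeff_monomial, Finset.mem_insert, Finset.mem_singleton]
  by_cases hu : u = β <;> by_cases hv : v = β
  · exact absurd (hu.trans hv.symm) huv
  · simp [hu, hv, eq_comm]
  · simp [hu, hv, eq_comm]
  · simp [hu, hv, eq_comm]

lemma binom_coeff_u {u v : Fin d →₀ ℕ} (huv : u ≠ v) :
    (monomial u 1 - monomial v (1:F)).coeff u = 1 := by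
  simp [coeff_monomial, huv, Ne.symm huv]

lemma isLM_binom (o : MonOrder d) {u v : Fin d →₀ ℕ} (huv : u ≠ v) (hle : v ≤ u) :
    o.IsLM (monomial u 1 - monomial v (1:F)) u := by
  refine ⟨by rw [binom_support huv]; simp, fun β hβ => ?_⟩
  rw [binom_support huv] at hβ
  rcases Finset.mem_insert.mp hβ with rfl | hβ
  · exact o.toLinearOrder.le_refl _
  · rw [Finset.mem_singleton.mp hβ]; exact o.div_le hle

lemma isLM_binom_eq (o : MonOrder d) {u v : Fin d →₀ ℕ} (huv : u ≠ v) (hle : v ≤ u)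
    {α : Fin d →₀ ℕ} (h : o.IsLM (monomial u 1 - monomial v (1:F)) α) : α = u := by
  obtain ⟨hs, hmax⟩ := h
  rw [binom_support huv] at hs
  rcases Finset.mem_insert.mp hs with rfl | hs
  · rfl
  · have hα : α = v := Finset.mem_singleton.mp hs
    subst hα
    exact absurd (o.eq_of_div_le hle (hmax u (by rw [binom_support huv]; simp))) huv

lemma isLM_mono (o : MonOrder d) (u : Fin d →₀ ℕ) : o.IsLM (monomial u (1:F)) u := by
  classical
  constructor
  · simp [support_monomial]
  · intro β hβ
    rw [support_monomial, if_neg one_ne_zero, Finset.mem_singleton] at hβ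
    subst hβ; exact o.toLinearOrder.le_refl _

lemma isLM_mono_eq (o : MonOrder d) {u α : Fin d →₀ ℕ}
    (h : o.IsLM (monomial u (1:F)) α) : α = u := by
  classical
  have := h.1
  rw [support_monomial, if_neg one_ne_zero, Finset.mem_singleton] at this
  exact this

open Classical in
lemma eval_indicator (ξ : Fin d → F) (hξ : ∀ i, ξ i = 0 ∨ ξ i = 1) (β : Fin d →₀ ℕ) :
    (∏ i ∈ β.support, ξ i ^ β i) = if ∀ i, β i ≠ 0 → ξ i = 1 then 1 else 0 := by
  split_ifs with h
  · apply Finset.prod_eq_one; intro i hi; rw [h i (Finsupp.mem_support_iff.mp hi), one_pow]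
  · push_neg at h; obtain ⟨i, hi0, hi1⟩ := h
    refine Finset.prod_eq_zero (Finsupp.mem_support_iff.mpr hi0) ?_
    rcases hξ i with h0|h1
    · rw [h0, zero_pow hi0]
    · exact absurd h1 hi1

lemma Xdef (i : Fin d) : (X i : MvPolynomial (Fin d) F) = monomial (Finsupp.single i 1) 1 := rfl

lemma canon_sq (i : Fin d) :
    (X i * (X i - 1) : MvPolynomial (Fin d) F)
      = monomial (Finsupp.single i 2) 1 - monomial (Finsupp.single i 1) 1 := by
  rw [mul_sub, mul_one, ← sq, X_pow_eq_monomial, Xdef]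

lemma canon_mul (i j : Fin d) :
    (X i * X j : MvPolynomial (Fin d) F)
      = monomial (Finsupp.single i 1 + Finsupp.single j 1) 1 := by
  rw [Xdef, Xdef, monomial_mul, one_mul]

lemma canon_six (i j : Fin d) :
    ((X j - 1) * X i : MvPolynomial (Fin d) F)
      = monomial (Finsupp.single i 1 + Finsupp.single j 1) 1 - monomial (Finsupp.single i 1) 1 := by
  rw [sub_mul, one_mul, mul_comm (X j) (X i), canon_mul, Xdef]

lemma sq_ne (i : Fin d) : Finsupp.single i 2 ≠ Finsupp.single i (1:ℕ) :=
  fs_ne i (by simp)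

lemma sq_le' (i : Fin d) : Finsupp.single i (1:ℕ) ≤ Finsupp.single i 2 := by
  rw [Finsupp.single_le_iff]; simp

lemma six_ne {i j : Fin d} (hij : i ≠ j) :
    Finsupp.single i 1 + Finsupp.single j 1 ≠ Finsupp.single i (1:ℕ) :=
  fs_ne j (by simp [Finsupp.single_eq_of_ne hij, Finsupp.single_eq_of_ne (Ne.symm hij)])

lemma six_le (i j : Fin d) :
    Finsupp.single i (1:ℕ) ≤ Finsupp.single i 1 + Finsupp.single j 1 :=
  self_le_add_right _ _

end F

/-- For `d ≥ 3`, let `Ξ_d ⊆ F^d` be the four-point set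
`{(0,0,0,0,…,0), (0,1,0,0,…,0), (0,0,1,0,…,0), (1,0,1,0,…,0)}` (coordinates indexed by
`i₀, i₁, i₂`, the first three indices). Then
`G = {x₁(x₁−1), x₂(x₂−1), x₃(x₃−1), x₁x₂, x₂x₃, (x₃−1)x₁, x₄, …, x_d}` is, for every monomial
order `≺`, the reduced Gröbner basis of `I(Ξ_d)` w.r.t. `≺`, i.e. `G` is a universal Gröbner
basis for `I(Ξ_d)`. -/
theorem stmt15 {F : Type*} [Field F] [CharZero F] {d : ℕ} (hd : 3 ≤ d)
    (i₀ i₁ i₂ : Fin d) (h₀ : (i₀ : ℕ) = 0) (h₁ : (i₁ : ℕ) = 1) (h₂ : (i₂ : ℕ) = 2) :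
    ∀ o : MonOrder d,
      IsReducedGB o
        (vanishIdeal ({(fun _ => 0), (fun k => if k = i₁ then 1 else 0),
            (fun k => if k = i₂ then 1 else 0),
            (fun k => if k = i₀ ∨ k = i₂ then 1 else 0)} : Set (Fin d → F)))
        (({X i₀ * (X i₀ - 1), X i₁ * (X i₁ - 1), X i₂ * (X i₂ - 1),
            X i₀ * X i₁, X i₁ * X i₂, (X i₂ - 1) * X i₀} ∪
          {f | ∃ i : Fin d, 3 ≤ (i : ℕ) ∧ f = X i}) : Set (MvPolynomial (Fin d) F)) := by
  intro o
  classical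
  have hab : i₀ ≠ i₁ := fun h => by rw [h, h₁] at h₀; omega
  have hba : i₁ ≠ i₀ := hab.symm
  have hac : i₀ ≠ i₂ := fun h => by rw [h, h₂] at h₀; omega
  have hca : i₂ ≠ i₀ := hac.symm
  have hbc : i₁ ≠ i₂ := fun h => by rw [h, h₂] at h₁; omega
  have hcb : i₂ ≠ i₁ := hbc.symm
  have tri : ∀ i : Fin d, i = i₀ ∨ i = i₁ ∨ i = i₂ ∨ 3 ≤ (i : ℕ) := by
    intro i
    rcases Nat.lt_or_ge (i : ℕ) 3 with h | h
    · have : (i : ℕ) = 0 ∨ (i : ℕ) = 1 ∨ (i : ℕ) = 2 := by omega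
      rcases this with h' | h' | h'
      · exact Or.inl (Fin.ext (by omega))
      · exact Or.inr (Or.inl (Fin.ext (by omega)))
      · exact Or.inr (Or.inr (Or.inl (Fin.ext (by omega))))
    · exact Or.inr (Or.inr (Or.inr h))
  have memI : ∀ (Ξ : Set (Fin d → F)) (f : MvPolynomial (Fin d) F),
      f ∈ vanishIdeal Ξ ↔ ∀ ξ ∈ Ξ, eval ξ f = 0 := by
    intro Ξ f
    simp [vanishIdeal, Ideal.mem_iInf, RingHom.mem_ker]
  -- LM characterization
  have LMchar : ∀ g ∈ (({X i₀ * (X i₀ - 1), X i₁ * (X i₁ - 1), X i₂ * (X i₂ - 1),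
            X i₀ * X i₁, X i₁ * X i₂, (X i₂ - 1) * X i₀} ∪
          {f | ∃ i : Fin d, 3 ≤ (i : ℕ) ∧ f = X i}) : Set (MvPolynomial (Fin d) F)),
      ∀ β, o.IsLM g β →
      (g = X i₀ * (X i₀ - 1) ∧ β = Finsupp.single i₀ 2) ∨
      (g = X i₁ * (X i₁ - 1) ∧ β = Finsupp.single i₁ 2) ∨
      (g = X i₂ * (X i₂ - 1) ∧ β = Finsupp.single i₂ 2) ∨
      (g = X i₀ * X i₁ ∧ β = Finsupp.single i₀ 1 + Finsupp.single i₁ 1) ∨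
      (g = X i₁ * X i₂ ∧ β = Finsupp.single i₁ 1 + Finsupp.single i₂ 1) ∨
      (g = (X i₂ - 1) * X i₀ ∧ β = Finsupp.single i₀ 1 + Finsupp.single i₂ 1) ∨
      (∃ i : Fin d, 3 ≤ (i : ℕ) ∧ g = X i ∧ β = Finsupp.single i 1) := by
    rintro g (hg | ⟨i, hi3, rfl⟩) β hβ
    · simp only [Set.mem_insert_iff, Set.mem_singleton_iff] at hg
      rcases hg with rfl | rfl | rfl | rfl | rfl | rfl
      · exact Or.inl ⟨rfl, by rw [canon_sq] at hβ; exact isLM_binom_eq o (sq_ne i₀) (sq_le' i₀) hβ⟩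
      · exact Or.inr (Or.inl ⟨rfl, by rw [canon_sq] at hβ; exact isLM_binom_eq o (sq_ne i₁) (sq_le' i₁) hβ⟩)
      · exact Or.inr (Or.inr (Or.inl ⟨rfl, by rw [canon_sq] at hβ; exact isLM_binom_eq o (sq_ne i₂) (sq_le' i₂) hβ⟩))
      · exact Or.inr (Or.inr (Or.inr (Or.inl ⟨rfl, by rw [canon_mul] at hβ; exact isLM_mono_eq o hβ⟩)))
      · exact Or.inr (Or.inr (Or.inr (Or.inr (Or.inl ⟨rfl, by rw [canon_mul] at hβ; exact isLM_mono_eq o hβ⟩))))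
      · exact Or.inr (Or.inr (Or.inr (Or.inr (Or.inr (Or.inl ⟨rfl, by
          rw [canon_six] at hβ; exact isLM_binom_eq o (six_ne hac) (six_le i₀ i₂) hβ⟩)))))
    · exact Or.inr (Or.inr (Or.inr (Or.inr (Or.inr (Or.inr ⟨i, hi3, rfl, by
        rw [Xdef] at hβ; exact isLM_mono_eq o hβ⟩)))))
  refine ⟨?_, ?_, ?_, ?_, ?_, ?_, ?_⟩
  · -- finite
    refine Set.Finite.union ?_ ?_
    · exact (((((Set.finite_singleton _).insert _).insert _).insert _).insert _).insert _
    · refine (Set.finite_range X).subset ?_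
      rintro _ ⟨i, _, rfl⟩
      exact ⟨i, rfl⟩
  · -- G ⊆ I
    rintro g (hg | ⟨i, hi3, rfl⟩) <;>
      rw [SetLike.mem_coe, memI]
    · simp only [Set.mem_insert_iff, Set.mem_singleton_iff] at hg
      rintro ξ hξ
      simp only [Set.mem_insert_iff, Set.mem_singleton_iff] at hξ
      rcases hg with rfl | rfl | rfl | rfl | rfl | rfl <;>
        rcases hξ with rfl | rfl | rfl | rfl <;>
          simp [hab, hba, hac, hca, hbc, hcb]
    · have hi0 : i ≠ i₀ := fun h => by rw [h, h₀] at hi3; omega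
      have hi1 : i ≠ i₁ := fun h => by rw [h, h₁] at hi3; omega
      have hi2 : i ≠ i₂ := fun h => by rw [h, h₂] at hi3; omega
      rintro ξ hξ
      simp only [Set.mem_insert_iff, Set.mem_singleton_iff] at hξ
      rcases hξ with rfl | rfl | rfl | rfl <;> simp [hi0, hi1, hi2]
  · -- 0 ∉ G
    rintro (hg | ⟨i, _, hgX⟩)
    · simp only [Set.mem_insert_iff, Set.mem_singleton_iff] at hg
      rcases hg with h | h | h | h | h | h
      · rw [canon_sq] at h
        have := congrArg (coeff (Finsupp.single i₀ 2)) h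
        rw [coeff_zero, binom_coeff_u (sq_ne i₀)] at this
        exact zero_ne_one this
      · rw [canon_sq] at h
        have := congrArg (coeff (Finsupp.single i₁ 2)) h
        rw [coeff_zero, binom_coeff_u (sq_ne i₁)] at this
        exact zero_ne_one this
      · rw [canon_sq] at h
        have := congrArg (coeff (Finsupp.single i₂ 2)) h
        rw [coeff_zero, binom_coeff_u (sq_ne i₂)] at this
        exact zero_ne_one this
      · rw [canon_mul] at h
        exact one_ne_zero (monomial_eq_zero.mp h.symm)
      · rw [canon_mul] at h
        exact one_ne_zero (monomial_eq_zero.mp h.symm)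
      · rw [canon_six] at h
        have := congrArg (coeff (Finsupp.single i₀ 1 + Finsupp.single i₂ 1)) h
        rw [coeff_zero, binom_coeff_u (six_ne hac)] at this
        exact zero_ne_one this
    · exact X_ne_zero i hgX.symm
  · -- monic
    rintro g (hg | ⟨i, hi3, rfl⟩) α hLM
    · simp only [Set.mem_insert_iff, Set.mem_singleton_iff] at hg
      rcases hg with rfl | rfl | rfl | rfl | rfl | rfl
      · rw [canon_sq] at hLM ⊢
        rw [isLM_binom_eq o (sq_ne i₀) (sq_le' i₀) hLM]
        exact binom_coeff_u (sq_ne i₀)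
      · rw [canon_sq] at hLM ⊢
        rw [isLM_binom_eq o (sq_ne i₁) (sq_le' i₁) hLM]
        exact binom_coeff_u (sq_ne i₁)
      · rw [canon_sq] at hLM ⊢
        rw [isLM_binom_eq o (sq_ne i₂) (sq_le' i₂) hLM]
        exact binom_coeff_u (sq_ne i₂)
      · rw [canon_mul] at hLM ⊢
        rw [isLM_mono_eq o hLM]
        simp [coeff_monomial]
      · rw [canon_mul] at hLM ⊢
        rw [isLM_mono_eq o hLM]
        simp [coeff_monomial]
      · rw [canon_six] at hLM ⊢
        rw [isLM_binom_eq o (six_ne hac) (six_le i₀ i₂) hLM]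
        exact binom_coeff_u (six_ne hac)
    · rw [Xdef] at hLM ⊢
      rw [isLM_mono_eq o hLM]
      simp [coeff_monomial]
  · -- main condition
    intro f hf hf0 α hLM
    by_contra hcon
    push_neg at hcon
    have c1 : ¬ Finsupp.single i₀ 2 ≤ α :=
      hcon (X i₀ * (X i₀ - 1)) (Set.mem_union_left _ (by simp)) (Finsupp.single i₀ 2)
        (by rw [canon_sq]; exact isLM_binom o (sq_ne i₀) (sq_le' i₀))
    have c2 : ¬ Finsupp.single i₁ 2 ≤ α :=
      hcon (X i₁ * (X i₁ - 1)) (Set.mem_union_left _ (by simp)) (Finsupp.single i₁ 2)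
        (by rw [canon_sq]; exact isLM_binom o (sq_ne i₁) (sq_le' i₁))
    have c3 : ¬ Finsupp.single i₂ 2 ≤ α :=
      hcon (X i₂ * (X i₂ - 1)) (Set.mem_union_left _ (by simp)) (Finsupp.single i₂ 2)
        (by rw [canon_sq]; exact isLM_binom o (sq_ne i₂) (sq_le' i₂))
    have c4 : ¬ Finsupp.single i₀ 1 + Finsupp.single i₁ 1 ≤ α :=
      hcon (X i₀ * X i₁) (Set.mem_union_left _ (by simp))
        (Finsupp.single i₀ 1 + Finsupp.single i₁ 1)
        (by rw [canon_mul]; exact isLM_mono o _)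
    have c5 : ¬ Finsupp.single i₁ 1 + Finsupp.single i₂ 1 ≤ α :=
      hcon (X i₁ * X i₂) (Set.mem_union_left _ (by simp))
        (Finsupp.single i₁ 1 + Finsupp.single i₂ 1)
        (by rw [canon_mul]; exact isLM_mono o _)
    have c6 : ¬ Finsupp.single i₀ 1 + Finsupp.single i₂ 1 ≤ α :=
      hcon ((X i₂ - 1) * X i₀) (Set.mem_union_left _ (by simp))
        (Finsupp.single i₀ 1 + Finsupp.single i₂ 1)
        (by rw [canon_six]; exact isLM_binom o (six_ne hac) (six_le i₀ i₂))
    have cX : ∀ i : Fin d, 3 ≤ (i : ℕ) → ¬ Finsupp.single i 1 ≤ α := fun i hi =>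
      hcon (X i) (Set.mem_union_right _ ⟨i, hi, rfl⟩) (Finsupp.single i 1)
        (by rw [Xdef]; exact isLM_mono o _)
    have hA : α i₀ ≤ 1 := by
      by_contra h
      exact c1 (Finsupp.single_le_iff.mpr (by omega))
    have hB : α i₁ ≤ 1 := by
      by_contra h
      exact c2 (Finsupp.single_le_iff.mpr (by omega))
    have hC : α i₂ ≤ 1 := by
      by_contra h
      exact c3 (Finsupp.single_le_iff.mpr (by omega))
    have hhi : ∀ i : Fin d, 3 ≤ (i : ℕ) → α i = 0 := by
      intro i hi
      by_contra h
      exact cX i hi (Finsupp.single_le_iff.mpr (by omega))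
    have hAB : α i₀ = 0 ∨ α i₁ = 0 := by
      by_contra h
      push_neg at h
      exact c4 (pair_le hab (by omega) (by omega))
    have hBC : α i₁ = 0 ∨ α i₂ = 0 := by
      by_contra h
      push_neg at h
      exact c5 (pair_le hbc (by omega) (by omega))
    have hAC : α i₀ = 0 ∨ α i₂ = 0 := by
      by_contra h
      push_neg at h
      exact c6 (pair_le hac (by omega) (by omega))
    have hshape : α = 0 ∨ α = Finsupp.single i₀ 1 ∨ α = Finsupp.single i₁ 1 ∨
        α = Finsupp.single i₂ 1 := by
      by_cases h1 : α i₀ = 0 <;> by_cases h2 : α i₁ = 0 <;> by_cases h3 : α i₂ = 0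
      · left
        ext i
        rcases tri i with rfl|rfl|rfl|h
        · simp [h1]
        · simp [h2]
        · simp [h3]
        · simp [hhi i h]
      · right; right; right
        ext i
        have hc1 : α i₂ = 1 := by omega
        rcases tri i with rfl|rfl|rfl|h
        · simp [h1, Finsupp.single_eq_of_ne' hca]
        · simp [h2, Finsupp.single_eq_of_ne' hcb]
        · simp [hc1]
        · have hne2 : i₂ ≠ i := fun e => by rw [← e, h₂] at h; omega
          simp [hhi i h, Finsupp.single_eq_of_ne' hne2]
      · right; right; left
        ext i
        have hb1 : α i₁ = 1 := by omega
        rcases tri i with rfl|rfl|rfl|h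
        · simp [h1, Finsupp.single_eq_of_ne' hba]
        · simp [hb1]
        · simp [h3, Finsupp.single_eq_of_ne' hbc]
        · have hne1 : i₁ ≠ i := fun e => by rw [← e, h₁] at h; omega
          simp [hhi i h, Finsupp.single_eq_of_ne' hne1]
      · rcases hBC with h|h <;> [exact absurd h h2; exact absurd h h3]
      · right; left
        ext i
        have ha1 : α i₀ = 1 := by omega
        rcases tri i with rfl|rfl|rfl|h
        · simp [ha1]
        · simp [h2, Finsupp.single_eq_of_ne' hab]
        · simp [h3, Finsupp.single_eq_of_ne' hac]
        · have hne0 : i₀ ≠ i := fun e => by rw [← e, h₀] at h; omega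
          simp [hhi i h, Finsupp.single_eq_of_ne' hne0]
      · rcases hAC with h|h <;> [exact absurd h h1; exact absurd h h3]
      · rcases hAB with h|h <;> [exact absurd h h1; exact absurd h h2]
      · rcases hAB with h|h <;> [exact absurd h h1; exact absurd h h2]
    have Eqn : ∀ ξ : Fin d → F, (∀ i, ξ i = 0 ∨ ξ i = 1) → eval ξ f = 0 →
        ∑ β ∈ f.support.filter (fun β => ∀ i : Fin d, β i ≠ 0 → ξ i = 1), coeff β f = 0 := by
      intro ξ h01 h0
      have key : ∑ β ∈ f.support,
          (if (∀ i : Fin d, β i ≠ 0 → ξ i = 1) then coeff β f else 0) = eval ξ f := by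
        rw [eval_eq]
        refine Finset.sum_congr rfl fun β _ => ?_
        rw [eval_indicator ξ h01 β]
        split_ifs <;> simp
      rw [Finset.sum_filter, key, h0]
    have hf0' : eval (fun _ => (0:F)) f = 0 :=
      (memI _ f).mp hf _ (by simp)
    have hf1' : eval (fun k => if k = i₁ then (1:F) else 0) f = 0 :=
      (memI _ f).mp hf _ (by simp)
    have hf2' : eval (fun k => if k = i₂ then (1:F) else 0) f = 0 :=
      (memI _ f).mp hf _ (by simp)
    have hf3' : eval (fun k => if k = i₀ ∨ k = i₂ then (1:F) else 0) f = 0 :=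
      (memI _ f).mp hf _ (by simp)
    have E0 : ∑ β ∈ f.support.filter (fun β => ∀ i : Fin d, β i ≠ 0 → (0:F) = 1),
        coeff β f = 0 := Eqn _ (fun i => Or.inl rfl) hf0'
    have E1 : ∑ β ∈ f.support.filter
        (fun β => ∀ i : Fin d, β i ≠ 0 → (if i = i₁ then (1:F) else 0) = 1),
        coeff β f = 0 := Eqn _ (fun i => by by_cases h : i = i₁ <;> simp [h]) hf1'
    have E2 : ∑ β ∈ f.support.filter
        (fun β => ∀ i : Fin d, β i ≠ 0 → (if i = i₂ then (1:F) else 0) = 1),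
        coeff β f = 0 := Eqn _ (fun i => by by_cases h : i = i₂ <;> simp [h]) hf2'
    have E3 : ∑ β ∈ f.support.filter
        (fun β => ∀ i : Fin d, β i ≠ 0 → (if i = i₀ ∨ i = i₂ then (1:F) else 0) = 1),
        coeff β f = 0 :=
      Eqn _ (fun i => by by_cases h : i = i₀ ∨ i = i₂ <;> simp [h]) hf3'
    rcases hshape with rfl|rfl|rfl|rfl
    · -- α = 0
      have hfil : f.support.filter (fun β => ∀ i : Fin d, β i ≠ 0 → (0:F) = 1) = {0} := by
        ext β
        simp only [Finset.mem_filter, Finset.mem_singleton]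
        constructor
        · rintro ⟨hs, hp⟩
          ext i
          simp only [Finsupp.coe_zero, Pi.zero_apply]
          by_contra h
          exact zero_ne_one (hp i h)
        · rintro rfl
          exact ⟨hLM.1, fun i hi => absurd rfl hi⟩
      rw [hfil, Finset.sum_singleton] at E0
      exact mem_support_iff.mp hLM.1 E0
    · -- α = single i₀ 1 : use E3 and E2
      have hstep : f.support.filter
          (fun β => ∀ i : Fin d, β i ≠ 0 → (if i = i₀ ∨ i = i₂ then (1:F) else 0) = 1)
          = insert (Finsupp.single i₀ 1) (f.support.filter
              (fun β => ∀ i : Fin d, β i ≠ 0 → (if i = i₂ then (1:F) else 0) = 1)) := by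
        ext β
        simp only [Finset.mem_filter, Finset.mem_insert]
        constructor
        · rintro ⟨hs, hp⟩
          have hp' : ∀ i, β i ≠ 0 → i = i₀ ∨ i = i₂ := by
            intro i hi
            by_contra hne'
            have := hp i hi
            rw [if_neg hne'] at this
            exact zero_ne_one this
          by_cases ha0 : β i₀ = 0
          · refine Or.inr ⟨hs, fun i hi => ?_⟩
            rcases hp' i hi with rfl|rfl
            · exact absurd ha0 hi
            · rw [if_pos rfl]
          · left
            have hle : Finsupp.single i₀ 1 ≤ β := Finsupp.single_le_iff.mpr (by omega)
            exact o.eq_of_div_le hle (hLM.2 β hs)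
        · rintro (rfl | ⟨hs, hp⟩)
          · refine ⟨hLM.1, fun i hi => ?_⟩
            have : i = i₀ := by
              by_contra h
              exact hi (Finsupp.single_eq_of_ne' (Ne.symm h))
            rw [if_pos (Or.inl this)]
          · refine ⟨hs, fun i hi => ?_⟩
            have := hp i hi
            by_cases h : i = i₂
            · rw [if_pos (Or.inr h)]
            · rw [if_neg h] at this
              exact absurd this zero_ne_one
      have hnotin : Finsupp.single i₀ 1 ∉ f.support.filter
          (fun β => ∀ i : Fin d, β i ≠ 0 → (if i = i₂ then (1:F) else 0) = 1) := by
        simp only [Finset.mem_filter, not_and]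
        intro _ hp
        have := hp i₀ (by simp)
        rw [if_neg hac] at this
        exact zero_ne_one this
      rw [hstep, Finset.sum_insert hnotin, E2, add_zero] at E3
      exact mem_support_iff.mp hLM.1 E3
    · -- α = single i₁ 1 : use E1 and E0
      have hstep : f.support.filter
          (fun β => ∀ i : Fin d, β i ≠ 0 → (if i = i₁ then (1:F) else 0) = 1)
          = insert (Finsupp.single i₁ 1) (f.support.filter
              (fun β => ∀ i : Fin d, β i ≠ 0 → (0:F) = 1)) := by
        ext β
        simp only [Finset.mem_filter, Finset.mem_insert]
        constructor
        · rintro ⟨hs, hp⟩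
          have hp' : ∀ i, β i ≠ 0 → i = i₁ := by
            intro i hi
            by_contra hne'
            have := hp i hi
            rw [if_neg hne'] at this
            exact zero_ne_one this
          by_cases hb0 : β i₁ = 0
          · exact Or.inr ⟨hs, fun i hi => absurd hb0 (hp' i hi ▸ hi)⟩
          · left
            have hle : Finsupp.single i₁ 1 ≤ β := Finsupp.single_le_iff.mpr (by omega)
            exact o.eq_of_div_le hle (hLM.2 β hs)
        · rintro (rfl | ⟨hs, hp⟩)
          · refine ⟨hLM.1, fun i hi => ?_⟩
            have : i = i₁ := by
              by_contra h
              exact hi (Finsupp.single_eq_of_ne' (Ne.symm h))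
            rw [if_pos this]
          · exact ⟨hs, fun i hi => absurd (hp i hi) zero_ne_one⟩
      have hnotin : Finsupp.single i₁ 1 ∉ f.support.filter
          (fun β => ∀ i : Fin d, β i ≠ 0 → (0:F) = 1) := by
        simp only [Finset.mem_filter, not_and]
        intro _ hp
        exact zero_ne_one (hp i₁ (by simp))
      rw [hstep, Finset.sum_insert hnotin, E0, add_zero] at E1
      exact mem_support_iff.mp hLM.1 E1
    · -- α = single i₂ 1 : use E2 and E0
      have hstep : f.support.filter
          (fun β => ∀ i : Fin d, β i ≠ 0 → (if i = i₂ then (1:F) else 0) = 1)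
          = insert (Finsupp.single i₂ 1) (f.support.filter
              (fun β => ∀ i : Fin d, β i ≠ 0 → (0:F) = 1)) := by
        ext β
        simp only [Finset.mem_filter, Finset.mem_insert]
        constructor
        · rintro ⟨hs, hp⟩
          have hp' : ∀ i, β i ≠ 0 → i = i₂ := by
            intro i hi
            by_contra hne'
            have := hp i hi
            rw [if_neg hne'] at this
            exact zero_ne_one this
          by_cases hc0 : β i₂ = 0
          · exact Or.inr ⟨hs, fun i hi => absurd hc0 (hp' i hi ▸ hi)⟩
          · left
            have hle : Finsupp.single i₂ 1 ≤ β := Finsupp.single_le_iff.mpr (by omega)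
            exact o.eq_of_div_le hle (hLM.2 β hs)
        · rintro (rfl | ⟨hs, hp⟩)
          · refine ⟨hLM.1, fun i hi => ?_⟩
            have : i = i₂ := by
              by_contra h
              exact hi (Finsupp.single_eq_of_ne' (Ne.symm h))
            rw [if_pos this]
          · exact ⟨hs, fun i hi => absurd (hp i hi) zero_ne_one⟩
      have hnotin : Finsupp.single i₂ 1 ∉ f.support.filter
          (fun β => ∀ i : Fin d, β i ≠ 0 → (0:F) = 1) := by
        simp only [Finset.mem_filter, not_and]
        intro _ hp
        exact zero_ne_one (hp i₂ (by simp))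
      rw [hstep, Finset.sum_insert hnotin, E0, add_zero] at E2
      exact mem_support_iff.mp hLM.1 E2
  · -- minimality
    intro g hg g' hg' hne β β' hβ hβ'
    rcases LMchar g hg β hβ with ⟨rfl, rfl⟩|⟨rfl, rfl⟩|⟨rfl, rfl⟩|⟨rfl, rfl⟩|⟨rfl, rfl⟩|⟨rfl, rfl⟩|⟨i, hi3, rfl, rfl⟩ <;>
      rcases LMchar g' hg' β' hβ' with ⟨rfl, rfl⟩|⟨rfl, rfl⟩|⟨rfl, rfl⟩|⟨rfl, rfl⟩|⟨rfl, rfl⟩|⟨rfl, rfl⟩|⟨j, hj3, rfl, rfl⟩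
    all_goals try with_reducible exact absurd rfl hne
    all_goals try {
      have hij : i ≠ j := fun h => hne (by rw [h])
      exact not_le_of_coord i (by
        simp [Finsupp.single_apply, Ne.symm hij]) }
    all_goals try {
      have hi0 : i ≠ i₀ := fun h => by rw [h, h₀] at hi3; omega
      have hi1 : i ≠ i₁ := fun h => by rw [h, h₁] at hi3; omega
      have hi2 : i ≠ i₂ := fun h => by rw [h, h₂] at hi3; omega
      have hi0s := hi0.symm; have hi1s := hi1.symm; have hi2s := hi2.symm
      first
        | (apply not_le_of_coord i;
            norm_num [Finsupp.single_apply, Finsupp.add_apply, hi0, hi1, hi2, hi0s, hi1s, hi2s];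
            done)
        | (apply not_le_of_coord i₀;
            norm_num [Finsupp.single_apply, Finsupp.add_apply, hi0, hi1, hi2, hi0s, hi1s, hi2s,
              hab, hba, hac, hca, hbc, hcb]; done)
        | (apply not_le_of_coord i₁;
            norm_num [Finsupp.single_apply, Finsupp.add_apply, hi0, hi1, hi2, hi0s, hi1s, hi2s,
              hab, hba, hac, hca, hbc, hcb]; done)
        | (apply not_le_of_coord i₂;
            norm_num [Finsupp.single_apply, Finsupp.add_apply, hi0, hi1, hi2, hi0s, hi1s, hi2s,
              hab, hba, hac, hca, hbc, hcb]; done) }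
    all_goals try {
      have hj0 : j ≠ i₀ := fun h => by rw [h, h₀] at hj3; omega
      have hj1 : j ≠ i₁ := fun h => by rw [h, h₁] at hj3; omega
      have hj2 : j ≠ i₂ := fun h => by rw [h, h₂] at hj3; omega
      have hj0s := hj0.symm; have hj1s := hj1.symm; have hj2s := hj2.symm
      first
        | (apply not_le_of_coord i₀;
            norm_num [Finsupp.single_apply, Finsupp.add_apply, hj0, hj1, hj2, hj0s, hj1s, hj2s,
              hab, hba, hac, hca, hbc, hcb]; done)
        | (apply not_le_of_coord i₁;
            norm_num [Finsupp.single_apply, Finsupp.add_apply, hj0, hj1, hj2, hj0s, hj1s, hj2s,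
              hab, hba, hac, hca, hbc, hcb]; done)
        | (apply not_le_of_coord i₂;
            norm_num [Finsupp.single_apply, Finsupp.add_apply, hj0, hj1, hj2, hj0s, hj1s, hj2s,
              hab, hba, hac, hca, hbc, hcb]; done) }
    all_goals first
      | (apply not_le_of_coord i₀;
          norm_num [Finsupp.single_apply, Finsupp.add_apply, hab, hba, hac, hca, hbc, hcb];
          done)
      | (apply not_le_of_coord i₁;
          norm_num [Finsupp.single_apply, Finsupp.add_apply, hab, hba, hac, hca, hbc, hcb];
          done)
      | (apply not_le_of_coord i₂;
          norm_num [Finsupp.single_apply, Finsupp.add_apply, hab, hba, hac, hca, hbc, hcb];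
          done)
  · -- reducedness
    have lowred : ∀ k : Fin d, (k = i₀ ∨ k = i₁ ∨ k = i₂) →
        ∀ g' ∈ (({X i₀ * (X i₀ - 1), X i₁ * (X i₁ - 1), X i₂ * (X i₂ - 1),
            X i₀ * X i₁, X i₁ * X i₂, (X i₂ - 1) * X i₀} ∪
          {f | ∃ i : Fin d, 3 ≤ (i : ℕ) ∧ f = X i}) : Set (MvPolynomial (Fin d) F)),
        ∀ β, o.IsLM g' β → ¬ β ≤ Finsupp.single k 1 := by
      intro k hk g' hg' β hβ
      rcases LMchar g' hg' β hβ with ⟨rfl, rfl⟩|⟨rfl, rfl⟩|⟨rfl, rfl⟩|⟨rfl, rfl⟩|⟨rfl, rfl⟩|⟨rfl, rfl⟩|⟨j, hj3, rfl, rfl⟩ <;>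
        rcases hk with hk'|hk'|hk' <;> rw [hk']
      all_goals try {
        have hj0 : j ≠ i₀ := fun h => by rw [h, h₀] at hj3; omega
        have hj1 : j ≠ i₁ := fun h => by rw [h, h₁] at hj3; omega
        have hj2 : j ≠ i₂ := fun h => by rw [h, h₂] at hj3; omega
        have hj0s := hj0.symm; have hj1s := hj1.symm; have hj2s := hj2.symm
        apply not_le_of_coord j;
        norm_num [Finsupp.single_apply, Finsupp.add_apply, hj0, hj1, hj2, hj0s, hj1s, hj2s];
        done }
      all_goals first
        | (apply not_le_of_coord i₀;
            norm_num [Finsupp.single_apply, Finsupp.add_apply, hab, hba, hac, hca, hbc, hcb];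
            done)
        | (apply not_le_of_coord i₁;
            norm_num [Finsupp.single_apply, Finsupp.add_apply, hab, hba, hac, hca, hbc, hcb];
            done)
        | (apply not_le_of_coord i₂;
            norm_num [Finsupp.single_apply, Finsupp.add_apply, hab, hba, hac, hca, hbc, hcb];
            done)
    rintro g (hg6 | ⟨i, hi3, rfl⟩) α hαs hnot g' hg' β hβ
    · simp only [Set.mem_insert_iff, Set.mem_singleton_iff] at hg6
      rcases hg6 with rfl|rfl|rfl|rfl|rfl|rfl
      · rw [canon_sq] at hαs hnot
        rw [binom_support (sq_ne i₀)] at hαs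
        rcases Finset.mem_insert.mp hαs with rfl|hαs
        · exact absurd (isLM_binom o (sq_ne i₀) (sq_le' i₀)) hnot
        · have hα := Finset.mem_singleton.mp hαs
          subst hα
          exact lowred i₀ (Or.inl rfl) g' hg' β hβ
      · rw [canon_sq] at hαs hnot
        rw [binom_support (sq_ne i₁)] at hαs
        rcases Finset.mem_insert.mp hαs with rfl|hαs
        · exact absurd (isLM_binom o (sq_ne i₁) (sq_le' i₁)) hnot
        · have hα := Finset.mem_singleton.mp hαs
          subst hα
          exact lowred i₁ (Or.inr (Or.inl rfl)) g' hg' β hβ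
      · rw [canon_sq] at hαs hnot
        rw [binom_support (sq_ne i₂)] at hαs
        rcases Finset.mem_insert.mp hαs with rfl|hαs
        · exact absurd (isLM_binom o (sq_ne i₂) (sq_le' i₂)) hnot
        · have hα := Finset.mem_singleton.mp hαs
          subst hα
          exact lowred i₂ (Or.inr (Or.inr rfl)) g' hg' β hβ
      · rw [canon_mul] at hαs hnot
        rw [support_monomial, if_neg one_ne_zero, Finset.mem_singleton] at hαs
        subst hαs
        exact absurd (isLM_mono o _) hnot
      · rw [canon_mul] at hαs hnot
        rw [support_monomial, if_neg one_ne_zero, Finset.mem_singleton] at hαs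
        subst hαs
        exact absurd (isLM_mono o _) hnot
      · rw [canon_six] at hαs hnot
        rw [binom_support (six_ne hac)] at hαs
        rcases Finset.mem_insert.mp hαs with rfl|hαs
        · exact absurd (isLM_binom o (six_ne hac) (six_le i₀ i₂)) hnot
        · have hα := Finset.mem_singleton.mp hαs
          subst hα
          exact lowred i₀ (Or.inl rfl) g' hg' β hβ
    · rw [Xdef] at hαs hnot
      rw [support_monomial, if_neg one_ne_zero, Finset.mem_singleton] at hαs
      subst hαs
      exact absurd (isLM_mono o _) hnot
end

section
/- Let Ξ = {(0,0), (11/10, −1/10), (1/10, 9/10), (1,1)} ⊂ ℚ^2. Then the order ideal O = {1, x_1, x_2, x_1x_2} is a monomial order quotient basis for the vanishing ideal I(Ξ) ⊂ ℚ[x_1,x_2], but for every monomial order ≺ the Gröbner éscalier N_≺(I(Ξ)) is not equal to O; in particular, both {1, x_1, x_2, x_1^2} and {1, x_1, x_2, x_2^2} are linearly independent modulo I(Ξ). -/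
open MvPolynomial

/-- The Gröbner éscalier of an ideal `I` w.r.t. a monomial order `o`: the monomials (exponent
vectors) not divisible by the leading monomial of any nonzero element of `I`. -/
def escalier {d : ℕ} {F : Type*} [CommSemiring F] (o : MonOrder d)
    (I : Ideal (MvPolynomial (Fin d) F)) : Set (Fin d →₀ ℕ) :=
  {m | ∀ f ∈ I, f ≠ 0 → ∀ α, o.IsLM f α → ¬ α ≤ m}
/-- `O` (a set of exponent vectors) is a monomial order quotient basis for `I`: it is a finite
order ideal (lower set of exponents) whose monomials give an `F`-vector space basis of
`F[x]/I`. -/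
def IsMOQB {d : ℕ} {F : Type*} [Field F] (I : Ideal (MvPolynomial (Fin d) F))
    (O : Set (Fin d →₀ ℕ)) : Prop :=
  O.Finite ∧ IsLowerSet O ∧
  LinearIndependent F (fun t : O => Ideal.Quotient.mk I (monomial (t : Fin d →₀ ℕ) (1 : F))) ∧
  Submodule.span F
    (Set.range fun t : O => Ideal.Quotient.mk I (monomial (t : Fin d →₀ ℕ) (1 : F))) = ⊤
/-- The four points `(0,0), (11/10, −1/10), (1/10, 9/10), (1,1)` in `ℚ²`. -/
noncomputable def Xi16 : Set (Fin 2 → ℚ) :=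
  {![0, 0], ![11/10, -1/10], ![1/10, 9/10], ![1, 1]}

/-- The order ideal `O = {1, x₁, x₂, x₁x₂}`, given by its exponent vectors. -/
noncomputable def O16 : Set (Fin 2 →₀ ℕ) :=
  {0, Finsupp.single 0 1, Finsupp.single 1 1, Finsupp.single 0 1 + Finsupp.single 1 1}

noncomputable def pts : Fin 4 → (Fin 2 → ℚ) := ![![0,0], ![11/10,-1/10], ![1/10,9/10], ![1,1]]

noncomputable abbrev e1 : Fin 2 →₀ ℕ := Finsupp.single 0 1
noncomputable abbrev e2 : Fin 2 →₀ ℕ := Finsupp.single 1 1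
noncomputable abbrev e3 : Fin 2 →₀ ℕ := Finsupp.single 0 1 + Finsupp.single 1 1
noncomputable abbrev e4 : Fin 2 →₀ ℕ := Finsupp.single 0 2
noncomputable abbrev e5 : Fin 2 →₀ ℕ := Finsupp.single 1 2

lemma fs_eq_iff (a b : Fin 2 →₀ ℕ) : a = b ↔ a 0 = b 0 ∧ a 1 = b 1 :=
  ⟨fun h => by subst h; exact ⟨rfl, rfl⟩,
   fun ⟨h0, h1⟩ => Finsupp.ext fun i => by fin_cases i <;> assumption⟩

lemma mem_vanish (f : MvPolynomial (Fin 2) ℚ) :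
    f ∈ vanishIdeal Xi16 ↔ ∀ i : Fin 4, eval (pts i) f = 0 := by
  simp only [vanishIdeal, Ideal.mem_iInf, RingHom.mem_ker, Xi16, Set.mem_insert_iff,
    Set.mem_singleton_iff]
  constructor
  · intro h i
    fin_cases i <;> [exact h _ (Or.inl rfl); exact h _ (Or.inr (Or.inl rfl));
      exact h _ (Or.inr (Or.inr (Or.inl rfl))); exact h _ (Or.inr (Or.inr (Or.inr rfl)))]
  · rintro h ξ (rfl|rfl|rfl|rfl)
    exacts [h 0, h 1, h 2, h 3]

noncomputable def Ebar : (MvPolynomial (Fin 2) ℚ ⧸ vanishIdeal Xi16) →ₐ[ℚ] (Fin 4 → ℚ) :=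
  Ideal.Quotient.liftₐ _ (Pi.algHom ℚ _ (fun i => MvPolynomial.aeval (pts i)))
    (by
      intro a ha
      funext i
      have := (mem_vanish a).1 ha i
      exact this)

lemma Ebar_mk (f : MvPolynomial (Fin 2) ℚ) :
    Ebar (Ideal.Quotient.mk (vanishIdeal Xi16) f) = fun i => eval (pts i) f := by
  funext i
  rw [show eval (pts i) f = aeval (pts i) f by rw [← coe_aeval_eq_eval]; rfl]
  simp [Ebar, Ideal.Quotient.liftₐ_apply]
  rfl

lemma Ebar_inj : Function.Injective Ebar := by
  have : ∀ a, Ebar a = 0 → a = 0 := by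
    intro a ha
    obtain ⟨f, rfl⟩ := Ideal.Quotient.mk_surjective a
    rw [Ideal.Quotient.eq_zero_iff_mem, mem_vanish]
    intro i
    have := congrFun ((Ebar_mk f).symm.trans ha) i
    simpa using this
  intro a b hab
  have h2 := this (a - b) (by rw [map_sub, hab, sub_self])
  exact sub_eq_zero.mp h2

lemma li_transfer {n : Type*} (u : n → (Fin 2 →₀ ℕ))
    (h : LinearIndependent ℚ (fun j : n => fun i => eval (pts i) (monomial (u j) (1:ℚ)))) :
    LinearIndependent ℚ
      (fun j : n => Ideal.Quotient.mk (vanishIdeal Xi16) (monomial (u j) (1:ℚ))) := by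
  apply LinearIndependent.of_comp Ebar.toLinearMap
  have heq : (⇑Ebar.toLinearMap ∘ fun j => Ideal.Quotient.mk (vanishIdeal Xi16) (monomial (u j) (1:ℚ))) =
      fun j i => eval (pts i) (monomial (u j) (1:ℚ)) := funext fun j => Ebar_mk _
  rw [heq]
  exact h

lemma range4 {α : Type*} (a b c d : α) : ({a,b,c,d} : Set α) = Set.range ![a,b,c,d] := by
  ext x
  simp only [Set.mem_insert_iff, Set.mem_singleton_iff, Set.mem_range]
  constructor
  · rintro (rfl|rfl|rfl|rfl)
    exacts [⟨0, rfl⟩, ⟨1, rfl⟩, ⟨2, rfl⟩, ⟨3, rfl⟩]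
  · rintro ⟨i, rfl⟩
    fin_cases i <;> simp

lemma li_subtype {S : Set (Fin 2 →₀ ℕ)} (u : Fin 4 → (Fin 2 →₀ ℕ)) (hS : S = Set.range u)
    (hu : Function.Injective u)
    {M : Type*} [AddCommGroup M] [Module ℚ M] (g : (Fin 2 →₀ ℕ) → M)
    (h : LinearIndependent ℚ (fun j => g (u j))) :
    LinearIndependent ℚ (fun t : S => g t) := by
  subst hS
  refine (linearIndependent_equiv (Equiv.ofInjective u hu)).1 ?_
  convert h using 1
  rfl

-- the three evaluation families
lemma li_O : LinearIndependent ℚ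
    (fun j : Fin 4 => fun i => eval (pts i) (monomial ((![0, e1, e2, e3] : Fin 4 → _) j) (1:ℚ))) := by
  rw [Fintype.linearIndependent_iff]
  intro g hg
  have h0 := congrFun hg 0
  have h1 := congrFun hg 1
  have h2 := congrFun hg 2
  have h3 := congrFun hg 3
  simp only [Fin.sum_univ_four, Pi.add_apply, Pi.smul_apply, smul_eq_mul, Pi.zero_apply,
    Matrix.cons_val_zero, Matrix.cons_val_one, Matrix.head_cons, Matrix.cons_val_two,
    Matrix.tail_cons, Matrix.cons_val_three, eval_monomial, pts,
    Finsupp.prod_add_index', Finsupp.prod_single_index, Finsupp.prod_zero_index] at h0 h1 h2 h3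
  norm_num at h0 h1 h2 h3
  obtain ⟨a0, a1, a2, a3⟩ : g 0 = 0 ∧ g 1 = 0 ∧ g 2 = 0 ∧ g 3 = 0 :=
    ⟨by linarith, by linarith, by linarith, by linarith⟩
  intro i
  fin_cases i <;> assumption

noncomputable def hpol : MvPolynomial (Fin 2) ℚ :=
  monomial e4 98 + monomial e1 (-107) + monomial e2 11 + monomial e3 (-2)

noncomputable def hpol' : MvPolynomial (Fin 2) ℚ :=
  monomial e5 98 + monomial e1 (-9) + monomial e2 (-87) + monomial e3 (-2)

lemma hpol_mem : hpol ∈ vanishIdeal Xi16 := by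
  rw [mem_vanish]
  intro i
  fin_cases i <;>
    simp [hpol, pts, eval_monomial, Finsupp.prod_add_index', Finsupp.prod_single_index] <;>
    norm_num

lemma hpol'_mem : hpol' ∈ vanishIdeal Xi16 := by
  rw [mem_vanish]
  intro i
  fin_cases i <;>
    simp [hpol', pts, eval_monomial, Finsupp.prod_add_index', Finsupp.prod_single_index] <;>
    norm_num

lemma ne41 : e4 ≠ e1 := fun h => by
  have := ((fs_eq_iff _ _).1 h).1; simp [Finsupp.single_apply] at this
lemma ne42 : e4 ≠ e2 := fun h => by
  have := ((fs_eq_iff _ _).1 h).1; simp [Finsupp.single_apply] at this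
lemma ne43 : e4 ≠ e3 := fun h => by
  have := ((fs_eq_iff _ _).1 h).1; simp [Finsupp.single_apply] at this
lemma ne12 : e1 ≠ e2 := fun h => by
  have := ((fs_eq_iff _ _).1 h).1; simp [Finsupp.single_apply] at this
lemma ne13 : e1 ≠ e3 := fun h => by
  have := ((fs_eq_iff _ _).1 h).2; simp [Finsupp.single_apply] at this
lemma ne23 : e2 ≠ e3 := fun h => by
  have := ((fs_eq_iff _ _).1 h).1; simp [Finsupp.single_apply] at this
lemma ne51 : e5 ≠ e1 := fun h => by
  have := ((fs_eq_iff _ _).1 h).2; simp [Finsupp.single_apply] at this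
lemma ne52 : e5 ≠ e2 := fun h => by
  have := ((fs_eq_iff _ _).1 h).2; simp [Finsupp.single_apply] at this
lemma ne53 : e5 ≠ e3 := fun h => by
  have := ((fs_eq_iff _ _).1 h).2; simp [Finsupp.single_apply] at this

lemma coeff_e3_hpol : coeff e3 hpol = -2 := by
  simp [hpol, coeff_monomial, ne43, ne13.symm.symm, Ne.symm, ne13, ne23]

lemma coeff_e3_hpol' : coeff e3 hpol' = -2 := by
  simp [hpol', coeff_monomial, ne53, ne13, ne23]

lemma hpol_ne : hpol ≠ 0 := fun h => by have := coeff_e3_hpol; rw [h] at this; simp at this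

lemma hpol'_ne : hpol' ≠ 0 := fun h => by have := coeff_e3_hpol'; rw [h] at this; simp at this

lemma e3_mem_supp : e3 ∈ hpol.support := by
  rw [MvPolynomial.mem_support_iff, coeff_e3_hpol]; norm_num

lemma e3_mem_supp' : e3 ∈ hpol'.support := by
  rw [MvPolynomial.mem_support_iff, coeff_e3_hpol']; norm_num

lemma supp_hpol : hpol.support ⊆ {e4, e1, e2, e3} := by
  intro m hm
  rw [MvPolynomial.mem_support_iff] at hm
  by_contra hmem
  simp only [Finset.mem_insert, Finset.mem_singleton, not_or] at hmem
  obtain ⟨n4, n1, n2, n3⟩ := hmem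
  simp [hpol, coeff_monomial, Ne.symm n4, Ne.symm n1, Ne.symm n2, Ne.symm n3] at hm

lemma supp_hpol' : hpol'.support ⊆ {e5, e1, e2, e3} := by
  intro m hm
  rw [MvPolynomial.mem_support_iff] at hm
  by_contra hmem
  simp only [Finset.mem_insert, Finset.mem_singleton, not_or] at hmem
  obtain ⟨n5, n1, n2, n3⟩ := hmem
  simp [hpol', coeff_monomial, Ne.symm n5, Ne.symm n1, Ne.symm n2, Ne.symm n3] at hm

lemma exists_max (o : MonOrder 2) (s : Finset (Fin 2 →₀ ℕ)) (hs : s.Nonempty) :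
    ∃ γ ∈ s, ∀ β ∈ s, o.toLinearOrder.le β γ := by
  letI := o.toLinearOrder
  obtain ⟨γ, h1, h2⟩ := Finset.exists_max_image s id hs
  exact ⟨γ, h1, h2⟩

lemma escalier_ne (o : MonOrder 2) : escalier o (vanishIdeal Xi16) ≠ O16 := by
  intro hesc
  have key : ∀ (f : MvPolynomial (Fin 2) ℚ) (E : Fin 2 →₀ ℕ),
      f ∈ vanishIdeal Xi16 → f ≠ 0 → f.support ⊆ {E, e1, e2, e3} → e3 ∈ f.support →
      E ∉ O16 → o.toLinearOrder.le e3 E := by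
    intro f E hfI hf0 hsub he3 hEO
    obtain ⟨γ, hγ, hmax⟩ := exists_max o f.support ⟨e3, he3⟩
    have hγE : γ = E := by
      have hs := hsub hγ
      simp only [Finset.mem_insert, Finset.mem_singleton] at hs
      have hnO : γ ∉ O16 := by
        intro hγO
        have hmem : γ ∈ escalier o (vanishIdeal Xi16) := by rw [hesc]; exact hγO
        exact hmem f hfI hf0 γ ⟨hγ, fun β hβ => hmax β hβ⟩ le_rfl
      rcases hs with h|h|h|h
      · exact h
      · exact absurd (by rw [h]; simp [O16]) hnO
      · exact absurd (by rw [h]; simp [O16]) hnO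
      · exact absurd (by rw [h]; simp [O16]) hnO
    exact hγE ▸ hmax e3 he3
  have he4O : e4 ∉ O16 := by
    intro h
    rcases h with h|h|h|h <;>
      · have := ((fs_eq_iff _ _).1 h).1
        simp [Finsupp.single_apply] at this
  have he5O : e5 ∉ O16 := by
    intro h
    rcases h with h|h|h|h <;>
      · have := ((fs_eq_iff _ _).1 h).2
        simp [Finsupp.single_apply] at this
  have hle1 := key hpol e4 hpol_mem hpol_ne supp_hpol e3_mem_supp he4O
  have hle2 := key hpol' e5 hpol'_mem hpol'_ne supp_hpol' e3_mem_supp' he5O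
  have A := o.add_le_add e3 e4 e3 hle1
  have B := o.add_le_add e3 e5 e4 hle2
  have hEq54 : e5 + e4 = e3 + e3 := (fs_eq_iff _ _).2 (by simp [Finsupp.single_apply])
  rw [hEq54, add_comm e3 e4] at B
  have hE := o.toLinearOrder.le_antisymm _ _ A B
  have h0 := ((fs_eq_iff _ _).1 hE).1
  simp [Finsupp.single_apply] at h0

lemma mem_O16_iff (t : Fin 2 →₀ ℕ) : t ∈ O16 ↔ t 0 ≤ 1 ∧ t 1 ≤ 1 := by
  constructor
  · rintro (rfl|rfl|rfl|rfl) <;> simp [Finsupp.single_apply]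
  · rintro ⟨h0, h1⟩
    rcases Nat.le_one_iff_eq_zero_or_eq_one.mp h0 with h0'|h0' <;>
      rcases Nat.le_one_iff_eq_zero_or_eq_one.mp h1 with h1'|h1'
    · exact Or.inl ((fs_eq_iff _ _).2 (by simp [h0', h1']))
    · exact Or.inr (Or.inr (Or.inl ((fs_eq_iff _ _).2
        (by simp [h0', h1', Finsupp.single_apply]))))
    · exact Or.inr (Or.inl ((fs_eq_iff _ _).2 (by simp [h0', h1', Finsupp.single_apply])))
    · exact Or.inr (Or.inr (Or.inr ((fs_eq_iff _ _).2
        (by simp [h0', h1', Finsupp.single_apply]))))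

lemma lower_O16 : IsLowerSet O16 := by
  intro a b hba ha
  rw [mem_O16_iff] at ha ⊢
  rw [Finsupp.le_def] at hba
  exact ⟨le_trans (hba 0) ha.1, le_trans (hba 1) ha.2⟩

lemma finite_O16 : O16.Finite :=
  Set.Finite.insert _ (Set.Finite.insert _ (Set.Finite.insert _ (Set.finite_singleton _)))

lemma injO : Function.Injective ![(0 : Fin 2 →₀ ℕ), e1, e2, e3] := by
  intro i j hij
  fin_cases i <;> fin_cases j <;>
    simp_all [fs_eq_iff, Finsupp.single_apply]

lemma injX1 : Function.Injective ![(0 : Fin 2 →₀ ℕ), e1, e2, e4] := by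
  intro i j hij
  fin_cases i <;> fin_cases j <;>
    simp_all [fs_eq_iff, Finsupp.single_apply]

lemma injX2 : Function.Injective ![(0 : Fin 2 →₀ ℕ), e1, e2, e5] := by
  intro i j hij
  fin_cases i <;> fin_cases j <;>
    simp_all [fs_eq_iff, Finsupp.single_apply]

lemma li_X1 : LinearIndependent ℚ
    (fun j : Fin 4 => fun i => eval (pts i) (monomial ((![0, e1, e2, e4] : Fin 4 → _) j) (1:ℚ))) := by
  rw [Fintype.linearIndependent_iff]
  intro g hg
  have h0 := congrFun hg 0
  have h1 := congrFun hg 1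
  have h2 := congrFun hg 2
  have h3 := congrFun hg 3
  simp only [Fin.sum_univ_four, Pi.add_apply, Pi.smul_apply, smul_eq_mul, Pi.zero_apply,
    Matrix.cons_val_zero, Matrix.cons_val_one, Matrix.head_cons, Matrix.cons_val_two,
    Matrix.tail_cons, Matrix.cons_val_three, eval_monomial, pts,
    Finsupp.prod_add_index', Finsupp.prod_single_index, Finsupp.prod_zero_index] at h0 h1 h2 h3
  norm_num at h0 h1 h2 h3
  obtain ⟨a0, a1, a2, a3⟩ : g 0 = 0 ∧ g 1 = 0 ∧ g 2 = 0 ∧ g 3 = 0 :=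
    ⟨by linarith, by linarith, by linarith, by linarith⟩
  intro i
  fin_cases i <;> assumption

lemma li_X2 : LinearIndependent ℚ
    (fun j : Fin 4 => fun i => eval (pts i) (monomial ((![0, e1, e2, e5] : Fin 4 → _) j) (1:ℚ))) := by
  rw [Fintype.linearIndependent_iff]
  intro g hg
  have h0 := congrFun hg 0
  have h1 := congrFun hg 1
  have h2 := congrFun hg 2
  have h3 := congrFun hg 3
  simp only [Fin.sum_univ_four, Pi.add_apply, Pi.smul_apply, smul_eq_mul, Pi.zero_apply,
    Matrix.cons_val_zero, Matrix.cons_val_one, Matrix.head_cons, Matrix.cons_val_two,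
    Matrix.tail_cons, Matrix.cons_val_three, eval_monomial, pts,
    Finsupp.prod_add_index', Finsupp.prod_single_index, Finsupp.prod_zero_index] at h0 h1 h2 h3
  norm_num at h0 h1 h2 h3
  obtain ⟨a0, a1, a2, a3⟩ : g 0 = 0 ∧ g 1 = 0 ∧ g 2 = 0 ∧ g 3 = 0 :=
    ⟨by linarith, by linarith, by linarith, by linarith⟩
  intro i
  fin_cases i <;> assumption

lemma span_O :
    Submodule.span ℚ (Set.range fun t : O16 =>
      Ideal.Quotient.mk (vanishIdeal Xi16) (monomial (t : Fin 2 →₀ ℕ) (1:ℚ))) = ⊤ := by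
  set g : (Fin 2 →₀ ℕ) → _ := fun t => Ideal.Quotient.mk (vanishIdeal Xi16) (monomial t (1:ℚ))
    with hgdef
  have himg : (Set.range fun t : O16 => g t) = Set.range (g ∘ ![0, e1, e2, e3]) := by
    rw [← Set.image_eq_range, show O16 = Set.range ![(0 : Fin 2 →₀ ℕ), e1, e2, e3] from
      range4 _ _ _ _, ← Set.range_comp]
  rw [himg]
  have hmap : Submodule.map Ebar.toLinearMap
      (Submodule.span ℚ (Set.range (g ∘ ![0, e1, e2, e3]))) = ⊤ := by
    rw [Submodule.map_span, ← Set.range_comp]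
    have heq : (⇑Ebar.toLinearMap ∘ g ∘ ![0, e1, e2, e3]) =
        fun j : Fin 4 => fun i => eval (pts i) (monomial ((![0, e1, e2, e3] : Fin 4 → _) j) (1:ℚ)) := by
      funext j
      exact Ebar_mk _
    rw [heq]
    exact LinearIndependent.span_eq_top_of_card_eq_finrank li_O (by simp)
  have h2 : Submodule.map Ebar.toLinearMap ⊤ = ⊤ :=
    top_le_iff.1 (hmap ▸ Submodule.map_mono le_top)
  exact Submodule.map_injective_of_injective Ebar_inj (hmap.trans h2.symm)


/-- For `Ξ = {(0,0), (11/10, −1/10), (1/10, 9/10), (1,1)} ⊆ ℚ²`, the order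
ideal `O = {1, x₁, x₂, x₁x₂}` is a monomial order quotient basis for `I(Ξ)`, but for every
monomial order `≺` the Gröbner éscalier `N_≺(I(Ξ))` differs from `O`; in particular both
`{1, x₁, x₂, x₁²}` and `{1, x₁, x₂, x₂²}` are linearly independent modulo `I(Ξ)`. -/
theorem stmt16 :
    IsMOQB (vanishIdeal Xi16) O16 ∧
    (∀ o : MonOrder 2, escalier o (vanishIdeal Xi16) ≠ O16) ∧
    LinearIndependent ℚ
      (fun t : ({0, Finsupp.single 0 1, Finsupp.single 1 1, Finsupp.single 0 2} :
          Set (Fin 2 →₀ ℕ)) =>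
        Ideal.Quotient.mk (vanishIdeal Xi16) (monomial (t : Fin 2 →₀ ℕ) (1 : ℚ))) ∧
    LinearIndependent ℚ
      (fun t : ({0, Finsupp.single 0 1, Finsupp.single 1 1, Finsupp.single 1 2} :
          Set (Fin 2 →₀ ℕ)) =>
        Ideal.Quotient.mk (vanishIdeal Xi16) (monomial (t : Fin 2 →₀ ℕ) (1 : ℚ))) := by
  refine ⟨⟨finite_O16, lower_O16, ?_, span_O⟩, escalier_ne, ?_, ?_⟩
  · exact li_subtype ![0, e1, e2, e3] (range4 _ _ _ _) injO
      (fun t => Ideal.Quotient.mk (vanishIdeal Xi16) (monomial t (1:ℚ))) (li_transfer _ li_O)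
  · exact li_subtype ![0, e1, e2, e4] (range4 _ _ _ _) injX1
      (fun t => Ideal.Quotient.mk (vanishIdeal Xi16) (monomial t (1:ℚ))) (li_transfer _ li_X1)
  · exact li_subtype ![0, e1, e2, e5] (range4 _ _ _ _) injX2
      (fun t => Ideal.Quotient.mk (vanishIdeal Xi16) (monomial t (1:ℚ))) (li_transfer _ li_X2)
end
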